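/- With the same setup as the gradient-update identity, suppose additionally some systems in the averaging set actually satisfy X⁽ⁱ⁾ = ΘⱼZ⁽ⁱ⁾ + W⁽ⁱ⁾ for Θⱼ ≠ Θ₁ (misclassified systems forming set S̄). Then the error satisfies ‖Θ̂⁺ − Θ₁‖ ≤ ‖Θ̂ − Θ₁‖·‖I − (2η/m)ΣᵢZ⁽ⁱ⁾Z⁽ⁱ⁾ᵀ‖ + (2η/m)Σᵢ‖W⁽ⁱ⁾Z⁽ⁱ⁾ᵀ‖ + ‖Θⱼ − Θ₁‖·(2η/m)·‖Σ_{i∈S̄} Z⁽ⁱ⁾Z⁽ⁱ⁾ᵀ‖. -/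

import Mathlib

open Matrix Finset

open scoped Matrix.Norms.L2Operator

/-- Triangle-inequality error bound with misclassified systems: if the systems in
`S̄` have data generated by `Θⱼ` and the rest by `Θ₁`, then after one gradient step
`‖Θ̂⁺ − Θ₁‖ ≤ ‖Θ̂ − Θ₁‖·‖I − (2η/m)ΣᵢZ⁽ⁱ⁾Z⁽ⁱ⁾ᵀ‖ + (2η/m)Σᵢ‖W⁽ⁱ⁾Z⁽ⁱ⁾ᵀ‖
  + ‖Θⱼ − Θ₁‖·(2η/m)·‖Σ_{i∈S̄}Z⁽ⁱ⁾Z⁽ⁱ⁾ᵀ‖`. -/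
theorem stmt_10 {nx p q m : ℕ} (η : ℝ) (hη : 0 < η) (hm : 0 < m)
    (Θ₁ Θj Θhat : Matrix (Fin nx) (Fin p) ℝ)
    (X W : Fin m → Matrix (Fin nx) (Fin q) ℝ)
    (Z : Fin m → Matrix (Fin p) (Fin q) ℝ)
    (Sbar : Finset (Fin m))
    (hX : ∀ i, X i = (if i ∈ Sbar then Θj else Θ₁) * Z i + W i) :
    ‖(Θhat + (2 * η / m) • ∑ i, (X i - Θhat * Z i) * (Z i)ᵀ) - Θ₁‖
      ≤ ‖Θhat - Θ₁‖ * ‖(1 : Matrix (Fin p) (Fin p) ℝ)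
            - (2 * η / m) • ∑ i, Z i * (Z i)ᵀ‖
        + (2 * η / m) * ∑ i, ‖W i * (Z i)ᵀ‖
        + ‖Θj - Θ₁‖ * (2 * η / m) * ‖∑ i ∈ Sbar, Z i * (Z i)ᵀ‖ := by
  set c : ℝ := 2 * η / m with hc
  have hc0 : 0 ≤ c := by positivity
  set T : Matrix (Fin p) (Fin p) ℝ := ∑ i, Z i * (Z i)ᵀ with hT
  set M : Matrix (Fin p) (Fin p) ℝ := ∑ i ∈ Sbar, Z i * (Z i)ᵀ with hM
  -- key sum decomposition
  have hsum : (∑ i, (X i - Θhat * Z i) * (Z i)ᵀ)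
      = Θ₁ * T + (Θj - Θ₁) * M + (∑ i, W i * (Z i)ᵀ) - Θhat * T := by
    have h1 : ∀ i : Fin m, (X i - Θhat * Z i) * (Z i)ᵀ
        = Θ₁ * (Z i * (Z i)ᵀ)
          + (if i ∈ Sbar then (Θj - Θ₁) * (Z i * (Z i)ᵀ) else 0)
          + W i * (Z i)ᵀ - Θhat * (Z i * (Z i)ᵀ) := by
      intro i
      rw [hX i]
      split_ifs with h
      · rw [Matrix.sub_mul, Matrix.add_mul, Matrix.mul_assoc, Matrix.mul_assoc,
          Matrix.sub_mul]
        abel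
      · rw [Matrix.sub_mul, Matrix.add_mul, Matrix.mul_assoc, Matrix.mul_assoc]
        rw [add_zero]
    rw [Finset.sum_congr rfl (fun i _ => h1 i)]
    simp only [Finset.sum_sub_distrib, Finset.sum_add_distrib]
    rw [Finset.sum_ite_mem, Finset.univ_inter, ← Matrix.mul_sum, ← Matrix.mul_sum,
      ← Matrix.mul_sum]
  -- key identity
  have key : (Θhat + c • ∑ i, (X i - Θhat * Z i) * (Z i)ᵀ) - Θ₁
      = (Θhat - Θ₁) * (1 - c • T) + c • (∑ i, W i * (Z i)ᵀ)
        + (Θj - Θ₁) * (c • M) := by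
    rw [hsum]
    simp only [smul_add, smul_sub, Matrix.mul_sub, Matrix.sub_mul, Matrix.mul_one,
      Matrix.mul_smul]
    abel
  rw [key]
  have t1 : ‖(Θhat - Θ₁) * (1 - c • T)‖ ≤ ‖Θhat - Θ₁‖ * ‖(1 : Matrix (Fin p) (Fin p) ℝ) - c • T‖ :=
    Matrix.l2_opNorm_mul _ _
  have t2 : ‖c • (∑ i, W i * (Z i)ᵀ)‖ ≤ c * ∑ i, ‖W i * (Z i)ᵀ‖ := by
    rw [norm_smul, Real.norm_of_nonneg hc0]
    exact mul_le_mul_of_nonneg_left (norm_sum_le _ _) hc0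
  have t3 : ‖(Θj - Θ₁) * (c • M)‖ ≤ ‖Θj - Θ₁‖ * c * ‖M‖ := by
    calc ‖(Θj - Θ₁) * (c • M)‖ ≤ ‖Θj - Θ₁‖ * ‖c • M‖ := Matrix.l2_opNorm_mul _ _
      _ = ‖Θj - Θ₁‖ * c * ‖M‖ := by
          rw [norm_smul, Real.norm_of_nonneg hc0]; ring
  calc ‖(Θhat - Θ₁) * (1 - c • T) + c • (∑ i, W i * (Z i)ᵀ) + (Θj - Θ₁) * (c • M)‖
      ≤ ‖(Θhat - Θ₁) * (1 - c • T)‖ + ‖c • (∑ i, W i * (Z i)ᵀ)‖ + ‖(Θj - Θ₁) * (c • M)‖ :=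
        norm_add₃_le
    _ ≤ _ := add_le_add (add_le_add t1 t2) t3
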